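/- Define g_n by g_0 = 1, g_1 = 1/(1-q) (case a = -1: g_1 = -1/(q-1)) via g_n(q^{2n} - 1) = -q g_{n-2} - (1+q) g_{n-1} with the sign conventions giving (1 - q^{2n}) g_n = q g_{n-2} + (1+q) g_{n-1}. Then g_n > 0 for all n, and f_n := g_n q^{n^2} defines an entire function f(1/z) = \sum_n f_n z^n with positive Taylor coefficients. -/

import Mathlib

/-- The coefficients of case `a = -1` of Proposition 4.1:
`g_0 = 1`, `g_1 = 1/(1-q)`, and `(1 - q^{2n}) g_n = q g_{n-2} + (1+q) g_{n-1}`. -/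
noncomputable def gSeq (q : ℝ) : ℕ → ℝ
  | 0 => 1
  | 1 => 1 / (1 - q)
  | (n + 2) => (q * gSeq q n + (1 + q) * gSeq q (n + 1)) / (1 - q ^ (2 * (n + 2)))

lemma gSeq_pos (q : ℝ) (hq0 : 0 < q) (hq1 : q < 1) : ∀ n, 0 < gSeq q n := by
  have key : ∀ n, 0 < gSeq q n ∧ 0 < gSeq q (n + 1) := by
    intro n
    induction n with
    | zero =>
      constructor
      · simp [gSeq]
      · show 0 < 1 / (1 - q)
        exact div_pos one_pos (by linarith)
    | succ k ih =>
      refine ⟨ih.2, ?_⟩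
      show 0 < gSeq q (k + 2)
      rw [gSeq]
      have hd : 0 < 1 - q ^ (2 * (k + 2)) := by
        have : q ^ (2 * (k + 2)) < 1 := pow_lt_one₀ hq0.le hq1 (by omega)
        linarith
      have := ih.1; have := ih.2
      positivity
  exact fun n => (key n).1

lemma gSeq_le (q : ℝ) (hq0 : 0 < q) (hq1 : q < 1) :
    ∀ n, gSeq q n ≤ (3 / (1 - q ^ 2)) ^ n := by
  set C : ℝ := 3 / (1 - q ^ 2) with hC
  have hq2 : 0 < 1 - q ^ 2 := by nlinarith
  have hC1 : 1 ≤ C := by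
    rw [hC, le_div_iff₀ hq2]; nlinarith
  have hCpos : 0 < C := lt_of_lt_of_le one_pos hC1
  have key : ∀ n, gSeq q n ≤ C ^ n ∧ gSeq q (n + 1) ≤ C ^ (n + 1) := by
    intro n
    induction n with
    | zero =>
      constructor
      · simp [gSeq]
      · show 1 / (1 - q) ≤ C ^ (0 + 1)
        rw [zero_add, pow_one, hC, div_le_div_iff₀ (by linarith) hq2]
        nlinarith
    | succ k ih =>
      refine ⟨ih.2, ?_⟩
      show gSeq q (k + 2) ≤ C ^ (k + 2)
      rw [gSeq]
      have hd : 0 < 1 - q ^ (2 * (k + 2)) := by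
        have : q ^ (2 * (k + 2)) < 1 := pow_lt_one₀ hq0.le hq1 (by omega)
        linarith
      have hd2 : 1 - q ^ 2 ≤ 1 - q ^ (2 * (k + 2)) := by
        have : q ^ (2 * (k + 2)) ≤ q ^ 2 :=
          pow_le_pow_of_le_one hq0.le hq1.le (by omega)
        linarith
      rw [div_le_iff₀ hd]
      have h1 := ih.1
      have h2 := ih.2
      have hpk : (0:ℝ) < C ^ k := pow_pos hCpos k
      have hstep : C ^ (k + 1) ≤ C ^ (k + 2) := by
        apply pow_le_pow_right₀ hC1; omega
      have hq3 : q * gSeq q k + (1 + q) * gSeq q (k + 1)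
          ≤ q * C ^ k + (1 + q) * C ^ (k + 1) := by
        have := gSeq_pos q hq0 hq1 k
        have := gSeq_pos q hq0 hq1 (k + 1)
        nlinarith
      calc q * gSeq q k + (1 + q) * gSeq q (k + 1)
          ≤ q * C ^ k + (1 + q) * C ^ (k + 1) := hq3
        _ ≤ 3 * C ^ (k + 1) := by
            have : C ^ k ≤ C ^ (k + 1) := pow_le_pow_right₀ hC1 (by omega)
            nlinarith
        _ = (1 - q ^ 2) * (C * C ^ (k + 1)) := by
            rw [hC]; field_simp
        _ ≤ C ^ (k + 2) * (1 - q ^ (2 * (k + 2))) := by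
            rw [show C ^ (k+2) = C * C ^ (k+1) by ring]
            have hp : 0 < C * C ^ (k + 1) := by positivity
            rw [mul_comm (C * C ^ (k+1)) _]
            exact mul_le_mul_of_nonneg_right hd2 hp.le |>.trans_eq (mul_comm _ _) |>.trans_eq (mul_comm _ _)
  exact fun n => (key n).1

/-- every `g_n > 0`, and `f_n := g_n q^{n²}` defines an entire function
`f(1/z) = ∑_n f_n zⁿ` (the series converges for every complex `z`) with positive
Taylor coefficients. -/
theorem gSeq_pos_and_entire (q : ℝ) (hq0 : 0 < q) (hq1 : q < 1) :
    (∀ n : ℕ, 0 < gSeq q n) ∧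
    (∀ n : ℕ, 0 < gSeq q n * q ^ (n ^ 2)) ∧
    ∀ z : ℂ, Summable (fun n : ℕ => ((gSeq q n * q ^ (n ^ 2) : ℝ) : ℂ) * z ^ n) := by
  have hpos := gSeq_pos q hq0 hq1
  refine ⟨hpos, fun n => mul_pos (hpos n) (pow_pos hq0 _), fun z => ?_⟩
  set C : ℝ := 3 / (1 - q ^ 2) with hC
  have hq2 : 0 < 1 - q ^ 2 := by nlinarith
  have hCpos : 0 < C := div_pos (by norm_num) hq2
  -- dominating series
  set b : ℕ → ℝ := fun n => (C * (‖z‖ + 1)) ^ n * q ^ (n ^ 2) with hb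
  have hbpos : ∀ n, 0 < b n := by
    intro n
    have h : 0 < ‖z‖ + 1 := by positivity
    exact mul_pos (pow_pos (mul_pos hCpos h) n) (pow_pos hq0 _)
  have hbsum : Summable b := by
    apply summable_of_ratio_test_tendsto_lt_one (l := 0) one_pos
    · exact Filter.Eventually.of_forall fun n => (hbpos n).ne'
    · have heq : (fun n : ℕ => ‖b (n + 1)‖ / ‖b n‖) =
          fun n : ℕ => (C * (‖z‖ + 1)) * q * (q ^ 2) ^ n := by
        funext n
        rw [Real.norm_of_nonneg (hbpos (n+1)).le, Real.norm_of_nonneg (hbpos n).le]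
        show (C * (‖z‖ + 1)) ^ (n+1) * q ^ ((n+1) ^ 2) / ((C * (‖z‖ + 1)) ^ n * q ^ (n ^ 2)) = _
        have h1 : (n + 1) ^ 2 = n ^ 2 + (2 * n + 1) := by ring
        rw [h1, pow_add, pow_add, ← pow_mul]
        have hqn : (0:ℝ) < q ^ (n ^ 2) := pow_pos hq0 _
        have hcz : (0:ℝ) < (C * (‖z‖ + 1)) ^ n := by positivity
        field_simp
        ring
      rw [heq]
      have : Filter.Tendsto (fun n : ℕ => (q ^ 2) ^ n) Filter.atTop (nhds 0) :=
        tendsto_pow_atTop_nhds_zero_of_lt_one (by positivity) (by nlinarith)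
      simpa using (this.const_mul ((C * (‖z‖ + 1)) * q))
  apply Summable.of_norm_bounded hbsum
  intro n
  rw [norm_mul, norm_pow]
  have hle := gSeq_le q hq0 hq1 n
  have hgn := (hpos n).le
  have hq' : (0:ℝ) < q ^ (n ^ 2) := pow_pos hq0 _
  have h1 : ‖((gSeq q n * q ^ (n ^ 2) : ℝ) : ℂ)‖ = gSeq q n * q ^ (n ^ 2) := by
    rw [Complex.norm_real, Real.norm_of_nonneg (by positivity)]
  rw [h1, hb]
  have h2 : gSeq q n * q ^ (n ^ 2) * ‖z‖ ^ n ≤ C ^ n * q ^ (n ^ 2) * (‖z‖ + 1) ^ n := by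
    have hz : ‖z‖ ^ n ≤ (‖z‖ + 1) ^ n :=
      pow_le_pow_left₀ (norm_nonneg z) (by linarith) n
    have : gSeq q n * ‖z‖ ^ n ≤ C ^ n * (‖z‖ + 1) ^ n := by
      apply mul_le_mul hle hz (by positivity) (by positivity)
    nlinarith
  calc gSeq q n * q ^ (n ^ 2) * ‖z‖ ^ n ≤ C ^ n * q ^ (n ^ 2) * (‖z‖ + 1) ^ n := h2
    _ = (C * (‖z‖ + 1)) ^ n * q ^ (n ^ 2) := by rw [mul_pow]; ring
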